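/- arXiv:1812.11859 — 4 statements merged into one kernel-verified Lean document; each statement's English description precedes it below -/
import Mathlib

section
/- (Newton's inequality) Let a_1, ..., a_n be positive reals, not all equal, and let c_k denote the k-th elementary symmetric polynomial of a_1,...,a_n (with c_0 = 1). Then for 1 ≤ k ≤ n−1, c_{k−1} c_{k+1} < c_k^2. -/
open Finset

namespace NewtonAux

variable {ι : Type*} [DecidableEq ι]

noncomputable def E (f : ι → ℝ) (s : Finset ι) (k : ℕ) : ℝ :=
  ∑ A ∈ s.powersetCard k, ∏ i ∈ A, f i

noncomputable def q (f : ι → ℝ) (s : Finset ι) (k : ℕ) : ℝ :=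
  E f s k / (s.card.choose k)

lemma E_zero (f : ι → ℝ) (s : Finset ι) : E f s 0 = 1 := by
  simp [E, Finset.powersetCard_zero]

lemma E_of_lt (f : ι → ℝ) {s : Finset ι} {k : ℕ} (h : s.card < k) : E f s k = 0 := by
  rw [E, Finset.powersetCard_eq_empty.2 h, Finset.sum_empty]

lemma E_pos {f : ι → ℝ} {s : Finset ι} (hf : ∀ i ∈ s, 0 < f i) {k : ℕ} (hk : k ≤ s.card) :
    0 < E f s k := by
  apply Finset.sum_pos
  · intro A hA
    rw [Finset.mem_powersetCard] at hA
    exact Finset.prod_pos fun i hi => hf i (hA.1 hi)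
  · exact Finset.powersetCard_nonempty.2 hk

lemma E_nonneg {f : ι → ℝ} {s : Finset ι} (hf : ∀ i ∈ s, 0 < f i) (k : ℕ) :
    0 ≤ E f s k := by
  apply Finset.sum_nonneg
  intro A hA
  rw [Finset.mem_powersetCard] at hA
  exact le_of_lt (Finset.prod_pos fun i hi => hf i (hA.1 hi))

lemma E_insert (f : ι → ℝ) {x : ι} {s : Finset ι} (hx : x ∉ s) (k : ℕ) :
    E f (insert x s) (k + 1) = E f s (k + 1) + f x * E f s k := by
  rw [E, Finset.powersetCard_succ_insert hx, Finset.sum_union, E, E, Finset.mul_sum]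
  · congr 1
    rw [Finset.sum_image]
    · apply Finset.sum_congr rfl
      intro A hA
      rw [Finset.mem_powersetCard] at hA
      have hxA : x ∉ A := fun h => hx (hA.1 h)
      rw [Finset.prod_insert hxA]
    · intro A hA B hB hAB
      rw [Finset.mem_coe, Finset.mem_powersetCard] at hA hB
      have hxA : x ∉ A := fun h => hx (hA.1 h)
      have hxB : x ∉ B := fun h => hx (hB.1 h)
      have : (insert x A).erase x = (insert x B).erase x := by rw [hAB]
      rwa [Finset.erase_insert hxA, Finset.erase_insert hxB] at this
  · rw [Finset.disjoint_right]
    intro A hA hA'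
    rw [Finset.mem_image] at hA
    obtain ⟨B, hB, rfl⟩ := hA
    rw [Finset.mem_powersetCard] at hA'
    exact hx (hA'.1 (Finset.mem_insert_self x B))

end NewtonAux

namespace NewtonAux

variable {ι : Type*} [DecidableEq ι]

lemma q_zero (f : ι → ℝ) (s : Finset ι) : q f s 0 = 1 := by
  simp [q, E_zero]

lemma q_of_lt (f : ι → ℝ) {s : Finset ι} {k : ℕ} (h : s.card < k) : q f s k = 0 := by
  rw [q, E_of_lt f h, zero_div]

lemma q_pos {f : ι → ℝ} {s : Finset ι} (hf : ∀ i ∈ s, 0 < f i) {k : ℕ} (hk : k ≤ s.card) :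
    0 < q f s k := by
  apply div_pos (E_pos hf hk)
  exact_mod_cast Nat.choose_pos hk

lemma q_nonneg {f : ι → ℝ} {s : Finset ι} (hf : ∀ i ∈ s, 0 < f i) (k : ℕ) :
    0 ≤ q f s k := by
  apply div_nonneg (E_nonneg hf k)
  positivity

lemma q_insert_succ (f : ι → ℝ) {x : ι} {s : Finset ι} (hx : x ∉ s) {k : ℕ}
    (hk : k ≤ s.card) :
    q f (insert x s) (k + 1) =
      (((s.card - k : ℕ) : ℝ) * q f s (k + 1) + ((k : ℝ) + 1) * f x * q f s k)
        / ((s.card : ℝ) + 1) := by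
  have hcard : (insert x s).card = s.card + 1 := Finset.card_insert_of_notMem hx
  have hC1 : (0 : ℝ) < ((s.card + 1).choose (k + 1) : ℝ) := by
    exact_mod_cast Nat.choose_pos (by omega)
  have hCk : (0 : ℝ) < (s.card.choose k : ℝ) := by
    exact_mod_cast Nat.choose_pos hk
  have hB : ((s.card : ℝ) + 1) * (s.card.choose k : ℝ)
      = ((s.card + 1).choose (k + 1) : ℝ) * ((k : ℝ) + 1) := by
    have := congrArg (Nat.cast (R := ℝ)) (Nat.add_one_mul_choose_eq s.card k)
    push_cast at this
    linarith [this]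
  have hA : (s.card.choose (k + 1) : ℝ) * ((s.card : ℝ) + 1)
      = ((s.card + 1).choose (k + 1) : ℝ) * ((s.card - k : ℕ) : ℝ) := by
    have h0 := Nat.choose_mul_succ_eq s.card (k + 1)
    have h2 : s.card + 1 - (k + 1) = s.card - k := by omega
    rw [h2] at h0
    have := congrArg (Nat.cast (R := ℝ)) h0
    push_cast [Nat.cast_sub hk] at this ⊢
    linarith [this]
  have hm1 : (0 : ℝ) < (s.card : ℝ) + 1 := by positivity
  rw [q, hcard, E_insert f hx, q, q, add_div, add_div]
  have claimB : f x * E f s k / ((s.card + 1).choose (k + 1) : ℝ)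
      = ((k : ℝ) + 1) * f x * (E f s k / (s.card.choose k : ℝ)) / ((s.card : ℝ) + 1) := by
    rw [div_eq_div_iff hC1.ne' hm1.ne']
    have hrhs : ((k : ℝ) + 1) * f x * (E f s k / (s.card.choose k : ℝ))
          * ((s.card + 1).choose (k + 1) : ℝ)
        = (((k : ℝ) + 1) * f x * E f s k * ((s.card + 1).choose (k + 1) : ℝ))
          / (s.card.choose k : ℝ) := by ring
    rw [hrhs, eq_div_iff hCk.ne']
    linear_combination (f x * E f s k) * hB
  rw [claimB]
  congr 1
  rcases lt_or_ge s.card (k + 1) with hlt | hle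
  · have hE0 : E f s (k + 1) = 0 := E_of_lt f hlt
    rw [hE0]
    simp
  · have hc1 : (0 : ℝ) < (s.card.choose (k + 1) : ℝ) := by
      exact_mod_cast Nat.choose_pos hle
    rw [div_eq_div_iff hC1.ne' hm1.ne']
    have hrhs : ((s.card - k : ℕ) : ℝ) * (E f s (k + 1) / (s.card.choose (k + 1) : ℝ))
          * ((s.card + 1).choose (k + 1) : ℝ)
        = (((s.card - k : ℕ) : ℝ) * E f s (k + 1) * ((s.card + 1).choose (k + 1) : ℝ))
          / (s.card.choose (k + 1) : ℝ) := by ring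
    rw [hrhs, eq_div_iff hc1.ne']
    linear_combination (E f s (k + 1)) * hA

end NewtonAux

namespace NewtonAux

variable {ι : Type*} [DecidableEq ι]

lemma key (Mr K t u v w z : ℝ) (hK : 0 ≤ K) (hMK : K + 2 ≤ Mr)
    (ht : 0 < t)
    (h1 : 0 ≤ (Mr - K) * (Mr - K - 2) * (w ^ 2 - v * z))
    (h2 : 0 ≤ K * (K + 2) * t ^ 2 * (v ^ 2 - u * w))
    (h3 : 0 ≤ K * (Mr - K - 2) * t * (v * w - u * z)) :
    ((Mr - K) * v + K * t * u) * ((Mr - K - 2) * z + (K + 2) * t * w)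
      ≤ ((Mr - K - 1) * w + (K + 1) * t * v) ^ 2 := by
  nlinarith [sq_nonneg (w - t * v), h1, h2, h3]

lemma main {f : ι → ℝ} (s : Finset ι) (hf : ∀ i ∈ s, 0 < f i) :
    ∀ j : ℕ, j + 2 ≤ s.card → q f s j * q f s (j + 2) ≤ q f s (j + 1) ^ 2 := by
  induction s using Finset.induction_on with
  | empty => intro j hj; simp at hj
  | @insert x s hx ih =>
    intro j hj
    have hfs : ∀ i ∈ s, 0 < f i := fun i hi => hf i (Finset.mem_insert_of_mem hi)
    have hfx : 0 < f x := hf x (Finset.mem_insert_self x s)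
    have hcard : (insert x s).card = s.card + 1 := Finset.card_insert_of_notMem hx
    rw [hcard] at hj
    -- abbreviations
    set t := f x with hts
    set m := s.card with hms
    -- the three q-values of s at j-1 (or dummy), j, j+1, j+2
    have hjm : j + 1 ≤ m := by omega
    have hv : 0 < q f s j := q_pos hfs (by omega)
    have hw : 0 < q f s (j + 1) := q_pos hfs hjm
    have hz : 0 ≤ q f s (j + 2) := q_nonneg hfs _
    -- h1 ingredient : v*z ≤ w^2
    have hvz : q f s j * q f s (j + 2) ≤ q f s (j + 1) ^ 2 := by
      rcases le_or_gt (j + 2) m with h | h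
      · exact ih hfs j h
      · have : q f s (j + 2) = 0 := q_of_lt f (by omega)
        rw [this, mul_zero]
        positivity
    -- ingredients involving u = q f s (j - 1) (u = 0 when j = 0)
    obtain ⟨u, hu0, huw, huz, hq'j⟩ :
        ∃ u : ℝ, 0 ≤ u ∧ u * q f s (j + 1) ≤ q f s j ^ 2 ∧
          u * q f s (j + 2) ≤ q f s j * q f s (j + 1) ∧
          q f (insert x s) j
            = (((m + 1 - j : ℕ) : ℝ) * q f s j + (j : ℝ) * t * u) / ((m : ℝ) + 1) := by
      rcases Nat.eq_zero_or_pos j with rfl | hj1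
      · refine ⟨0, le_rfl, by rw [zero_mul]; positivity, by rw [zero_mul]; positivity, ?_⟩
        rw [q_zero, q_zero]
        push_cast
        field_simp
        ring
      · obtain ⟨j', rfl⟩ : ∃ j', j = j' + 1 := ⟨j - 1, by omega⟩
        refine ⟨q f s j', q_nonneg hfs j', ih hfs j' (by omega), ?_, ?_⟩
        · -- q j' * q (j'+3) ≤ q (j'+1) * q (j'+2)
          have ha : q f s j' * q f s (j' + 2) ≤ q f s (j' + 1) ^ 2 := ih hfs j' (by omega)
          have hb : q f s (j' + 1) * q f s (j' + 1 + 2) ≤ q f s (j' + 1 + 1) ^ 2 := hvz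
          have hprod := mul_le_mul ha hb
            (mul_nonneg (q_nonneg hfs _) (q_nonneg hfs _)) (by positivity)
          have hvw : 0 < q f s (j' + 1) * q f s (j' + 1 + 1) := mul_pos hv hw
          rw [show j' + 1 + 2 = j' + 3 from rfl] at hb hprod ⊢
          rw [show j' + 1 + 1 = j' + 2 from rfl] at hvw hprod ⊢
          refine le_of_mul_le_mul_right ?_ hvw
          nlinarith [hprod]
        · have := q_insert_succ f hx (show j' ≤ s.card by omega)
          rw [this]
          have hc1 : m + 1 - (j' + 1) = m - j' := by omega
          rw [hc1]
          push_cast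
          ring
    have hq'j1 : q f (insert x s) (j + 1)
        = (((m - j : ℕ) : ℝ) * q f s (j + 1) + ((j : ℝ) + 1) * t * q f s j) / ((m : ℝ) + 1) :=
      q_insert_succ f hx (by omega)
    have hq'j2 : q f (insert x s) (j + 2)
        = (((m - (j + 1) : ℕ) : ℝ) * q f s (j + 2) + ((j : ℝ) + 1 + 1) * t * q f s (j + 1))
          / ((m : ℝ) + 1) := by
      have := q_insert_succ f hx (show j + 1 ≤ s.card by omega)
      rw [show j + 1 + 1 = j + 2 from rfl] at this
      rw [this]
      push_cast
      ring
    rw [hq'j, hq'j1, hq'j2, div_mul_div_comm, div_pow]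
    rw [show ((m : ℝ) + 1) * ((m : ℝ) + 1) = ((m : ℝ) + 1) ^ 2 by ring]
    rw [div_le_div_iff_of_pos_right (by positivity)]
    -- set up real parameters
    have hcast1 : ((m + 1 - j : ℕ) : ℝ) = ((m : ℝ) + 1) - (j : ℝ) := by
      rw [Nat.cast_sub (by omega)]; push_cast; ring
    have hcast2 : ((m - j : ℕ) : ℝ) = ((m : ℝ) + 1) - (j : ℝ) - 1 := by
      rw [Nat.cast_sub (by omega)]; push_cast; ring
    have hcast3 : ((m - (j + 1) : ℕ) : ℝ) = ((m : ℝ) + 1) - (j : ℝ) - 2 := by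
      rw [Nat.cast_sub (by omega)]; push_cast; ring
    rw [hcast1, hcast2, hcast3]
    have hMK : (j : ℝ) + 2 ≤ (m : ℝ) + 1 := by exact_mod_cast hj
    have h2' : ((j : ℝ) + 1 + 1) = (j : ℝ) + 2 := by ring
    rw [h2']
    exact key ((m : ℝ) + 1) (j : ℝ) t u (q f s j) (q f s (j + 1)) (q f s (j + 2))
      (by positivity) hMK hfx
      (mul_nonneg (mul_nonneg (by linarith) (by linarith)) (by nlinarith [hvz]))
      (mul_nonneg (mul_nonneg (mul_nonneg (by positivity) (by positivity)) (by positivity))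
        (by nlinarith [huw]))
      (mul_nonneg (mul_nonneg (mul_nonneg (by positivity) (by linarith)) (by positivity))
        (by nlinarith [huz]))

end NewtonAux

namespace NewtonAux

lemma choose_strict {n j : ℕ} (h : j + 2 ≤ n) :
    n.choose j * n.choose (j + 2) < n.choose (j + 1) ^ 2 := by
  have h1 : n.choose (j + 1) * (j + 1) = n.choose j * (n - j) := Nat.choose_succ_right_eq n j
  have h2 : n.choose (j + 2) * (j + 2) = n.choose (j + 1) * (n - (j + 1)) :=
    Nat.choose_succ_right_eq n (j + 1)
  have hp : 0 < n.choose (j + 1) := Nat.choose_pos (by omega)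
  have hmul : (j + 1) * (n - (j + 1)) < (n - j) * (j + 2) := by
    have hnj : 0 < n - j := by omega
    have hle : n - (j + 1) + 1 = n - j := by omega
    calc (j + 1) * (n - (j + 1)) < (j + 2) * (n - (j + 1) + 1) := by
          apply Nat.mul_lt_mul_of_lt_of_le (by omega) (by omega) (by omega)
      _ = (n - j) * (j + 2) := by rw [hle]; ring
  have hkey : n.choose j * n.choose (j + 2) * ((n - j) * (j + 2))
      < n.choose (j + 1) ^ 2 * ((n - j) * (j + 2)) := by
    calc n.choose j * n.choose (j + 2) * ((n - j) * (j + 2))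
        = (n.choose j * (n - j)) * (n.choose (j + 2) * (j + 2)) := by ring
      _ = (n.choose (j + 1) * (j + 1)) * (n.choose (j + 1) * (n - (j + 1))) := by
          rw [← h1, ← h2]
      _ = n.choose (j + 1) ^ 2 * ((j + 1) * (n - (j + 1))) := by ring
      _ < n.choose (j + 1) ^ 2 * ((n - j) * (j + 2)) := by
          exact Nat.mul_lt_mul_of_le_of_lt (le_refl _) hmul (by positivity)
  exact lt_of_mul_lt_mul_right hkey (Nat.zero_le _)

end NewtonAux

/-- Newton's inequality: if `a_1, …, a_n` are positive reals, not all equal, and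
`c_k` is the `k`-th elementary symmetric polynomial of the `a_i`, then
`c_{k−1} c_{k+1} < c_k²` for `1 ≤ k ≤ n−1`. -/
theorem newton_inequality (n : ℕ) (a : Fin n → ℝ)
    (hpos : ∀ i, 0 < a i) (hne : ¬ ∀ i j, a i = a j)
    (c : ℕ → ℝ)
    (hc : ∀ k, c k = ∑ A ∈ Finset.univ.powersetCard k, ∏ i ∈ A, a i)
    (k : ℕ) (hk1 : 1 ≤ k) (hkn : k ≤ n - 1) :
    c (k - 1) * c (k + 1) < c k ^ 2 := by
  obtain ⟨j, rfl⟩ : ∃ j, k = j + 1 := ⟨k - 1, by omega⟩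
  have hn : j + 2 ≤ n := by omega
  have hj1 : j + 1 - 1 = j := by omega
  rw [hj1]
  have hcardu : (Finset.univ : Finset (Fin n)).card = n := by simp
  have hfa : ∀ i ∈ (Finset.univ : Finset (Fin n)), 0 < a i := fun i _ => hpos i
  have hE : ∀ i : ℕ, NewtonAux.E a Finset.univ i = c i := fun i => (hc i).symm
  -- q values
  have hq : ∀ i : ℕ, NewtonAux.q a Finset.univ i = c i / (n.choose i : ℝ) := by
    intro i
    rw [NewtonAux.q, hE, hcardu]
  have hmain := NewtonAux.main Finset.univ hfa j (by rw [hcardu]; exact hn)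
  have hwpos : 0 < NewtonAux.q a Finset.univ (j + 1) :=
    NewtonAux.q_pos hfa (by rw [hcardu]; omega)
  -- rewrite c in terms of q
  have hCj : (0:ℝ) < (n.choose j : ℝ) := by exact_mod_cast Nat.choose_pos (by omega)
  have hCj1 : (0:ℝ) < (n.choose (j+1) : ℝ) := by exact_mod_cast Nat.choose_pos (by omega)
  have hCj2 : (0:ℝ) < (n.choose (j+2) : ℝ) := by exact_mod_cast Nat.choose_pos (by omega)
  have hcj : c j = NewtonAux.q a Finset.univ j * (n.choose j : ℝ) := by
    rw [hq, div_mul_cancel₀ _ hCj.ne']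
  have hcj1 : c (j+1) = NewtonAux.q a Finset.univ (j+1) * (n.choose (j+1) : ℝ) := by
    rw [hq, div_mul_cancel₀ _ hCj1.ne']
  have hcj2 : c (j+2) = NewtonAux.q a Finset.univ (j+2) * (n.choose (j+2) : ℝ) := by
    rw [hq, div_mul_cancel₀ _ hCj2.ne']
  have hchoose : ((n.choose j : ℝ) * (n.choose (j+2) : ℝ)) < (n.choose (j+1) : ℝ) ^ 2 := by
    exact_mod_cast NewtonAux.choose_strict hn
  calc c j * c (j + 1 + 1)
      = (NewtonAux.q a Finset.univ j * NewtonAux.q a Finset.univ (j+2))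
        * ((n.choose j : ℝ) * (n.choose (j+2) : ℝ)) := by
        rw [show j + 1 + 1 = j + 2 from rfl, hcj, hcj2]; ring
    _ ≤ NewtonAux.q a Finset.univ (j+1) ^ 2 * ((n.choose j : ℝ) * (n.choose (j+2) : ℝ)) := by
        apply mul_le_mul_of_nonneg_right hmain (by positivity)
    _ < NewtonAux.q a Finset.univ (j+1) ^ 2 * (n.choose (j+1) : ℝ) ^ 2 := by
        apply mul_lt_mul_of_pos_left hchoose (by positivity)
    _ = c (j + 1) ^ 2 := by rw [hcj1]; ring
end

section
/- The Shannon entropy H(p_1,...,p_n) = −Σ_{k=0}^n π_k^n log π_k^n of the Poisson binomial distribution with parameters p_1,...,p_n ∈ (0,1) is Schur concave in (p_1,...,p_n). Consequently, H(p_1,...,p_n) ≤ H(p̄,...,p̄) where p̄ = (Σ p_i)/n; i.e., among all Poisson binomial distributions with a given mean np̄, the binomial distribution B(n, p̄) maximizes the Shannon entropy. -/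
/-- The Poisson binomial mass function. -/
def poissonBinomial (n : ℕ) (p : ℕ → ℝ) (k : ℕ) : ℝ :=
  ∑ A ∈ (Finset.range n).powersetCard k,
    (∏ i ∈ A, p i) * ∏ j ∈ Finset.range n \ A, (1 - p j)

/-- The Shannon entropy of the Poisson binomial distribution with parameters
`p 0, …, p (n-1)`. -/
noncomputable def pbEntropy (n : ℕ) (p : ℕ → ℝ) : ℝ :=
  -∑ k ∈ Finset.range (n + 1),
    poissonBinomial n p k * Real.log (poissonBinomial n p k)



open Finset Real

/-- Generalized Poisson binomial mass over an index set. -/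
def PB (s : Finset ℕ) (p : ℕ → ℝ) (k : ℕ) : ℝ :=
  ∑ A ∈ s.powersetCard k, (∏ i ∈ A, p i) * ∏ j ∈ s \ A, (1 - p j)

lemma PB_congr {s : Finset ℕ} {p q : ℕ → ℝ} (h : ∀ i ∈ s, p i = q i) (k : ℕ) :
    PB s p k = PB s q k := by
  unfold PB
  refine Finset.sum_congr rfl fun A hA => ?_
  have hAs : A ⊆ s := (Finset.mem_powersetCard.1 hA).1
  congr 1
  · exact Finset.prod_congr rfl fun i hi => h i (hAs hi)
  · exact Finset.prod_congr rfl fun j hj => by rw [h j (Finset.mem_sdiff.1 hj).1]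

lemma PB_empty_succ (p : ℕ → ℝ) (k : ℕ) : PB ∅ p (k + 1) = 0 := by
  unfold PB
  rw [Finset.powersetCard_eq_empty.2 (by simp)]
  simp

lemma PB_empty_zero (p : ℕ → ℝ) : PB ∅ p 0 = 1 := by
  simp [PB]

lemma PB_eq_zero {s : Finset ℕ} (p : ℕ → ℝ) {k : ℕ} (h : s.card < k) : PB s p k = 0 := by
  simp [PB, Finset.powersetCard_eq_empty.2 h]

lemma PB_insert_zero {s : Finset ℕ} {i : ℕ} (h : i ∉ s) (p : ℕ → ℝ) :
    PB (insert i s) p 0 = (1 - p i) * PB s p 0 := by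
  simp only [PB, Finset.powersetCard_zero, Finset.sum_singleton, Finset.sdiff_empty,
    Finset.prod_empty, one_mul]
  rw [Finset.prod_insert h]

lemma PB_insert_succ {s : Finset ℕ} {i : ℕ} (h : i ∉ s) (p : ℕ → ℝ) (k : ℕ) :
    PB (insert i s) p (k + 1) = p i * PB s p k + (1 - p i) * PB s p (k + 1) := by
  classical
  unfold PB
  rw [Finset.powersetCard_succ_insert h, Finset.sum_union, Finset.sum_image]
  · rw [add_comm]
    congr 1
    · -- sets containing i: A = insert i B
      rw [Finset.mul_sum]
      refine Finset.sum_congr rfl fun B hB => ?_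
      obtain ⟨hBs, hcard⟩ := Finset.mem_powersetCard.1 hB
      have hiB : i ∉ B := fun hiB => h (hBs hiB)
      rw [Finset.prod_insert hiB]
      have e : insert i s \ insert i B = s \ B := by
        rw [Finset.insert_sdiff_insert, Finset.sdiff_insert_of_notMem h]
      rw [e]; ring
    · -- sets not containing i
      rw [Finset.mul_sum]
      refine Finset.sum_congr rfl fun A hA => ?_
      obtain ⟨hAs, hcard⟩ := Finset.mem_powersetCard.1 hA
      have hiA : i ∉ A := fun hiA => h (hAs hiA)
      rw [Finset.insert_sdiff_of_notMem _ hiA,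
        Finset.prod_insert (by simp [h, Finset.mem_sdiff])]
      ring
  · -- injectivity
    intro A hA B hB hAB
    obtain ⟨hAs, _⟩ := Finset.mem_powersetCard.1 hA
    obtain ⟨hBs, _⟩ := Finset.mem_powersetCard.1 hB
    have hiA : i ∉ A := fun hiA => h (hAs hiA)
    have hiB : i ∉ B := fun hiB => h (hBs hiB)
    have := congrArg (fun t => Finset.erase t i) hAB
    simpa [Finset.erase_insert hiA, Finset.erase_insert hiB] using this
  · -- disjoint
    rw [Finset.disjoint_left]
    rintro A hA hA'
    obtain ⟨hAs, _⟩ := Finset.mem_powersetCard.1 hA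
    obtain ⟨B, hB, rfl⟩ := Finset.mem_image.1 hA'
    exact h (hAs (Finset.mem_insert_self i B))

lemma PB_nonneg {s : Finset ℕ} {p : ℕ → ℝ} (hp : ∀ i ∈ s, p i ∈ Set.Icc (0:ℝ) 1) (k : ℕ) :
    0 ≤ PB s p k := by
  unfold PB
  refine Finset.sum_nonneg fun A hA => ?_
  have hAs : A ⊆ s := (Finset.mem_powersetCard.1 hA).1
  refine mul_nonneg (Finset.prod_nonneg fun i hi => (hp i (hAs hi)).1)
    (Finset.prod_nonneg fun j hj => ?_)
  have := (hp j (Finset.mem_sdiff.1 hj).1).2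
  linarith

lemma PB_pos {s : Finset ℕ} {p : ℕ → ℝ} (hp : ∀ i ∈ s, p i ∈ Set.Ioo (0:ℝ) 1) {k : ℕ}
    (hk : k ≤ s.card) : 0 < PB s p k := by
  unfold PB
  obtain ⟨A, hAs, hAcard⟩ := Finset.exists_subset_card_eq hk
  refine Finset.sum_pos' (fun B hB => ?_) ⟨A, Finset.mem_powersetCard.2 ⟨hAs, hAcard⟩, ?_⟩
  · have hBs : B ⊆ s := (Finset.mem_powersetCard.1 hB).1
    refine mul_nonneg (Finset.prod_nonneg fun i hi => (hp i (hBs hi)).1.le)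
      (Finset.prod_nonneg fun j hj => ?_)
    have := (hp j (Finset.mem_sdiff.1 hj).1).2
    linarith
  · refine mul_pos (Finset.prod_pos fun i hi => (hp i (hAs hi)).1)
      (Finset.prod_pos fun j hj => ?_)
    have := (hp j (Finset.mem_sdiff.1 hj).1).2
    linarith

lemma PB_sum_one (s : Finset ℕ) (p : ℕ → ℝ) :
    ∑ k ∈ Finset.range (s.card + 1), PB s p k = 1 := by
  classical
  have h1 : (1:ℝ) = ∏ i ∈ s, (p i + (1 - p i)) := by
    simp
  rw [h1, Finset.prod_add, Finset.sum_powerset]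
  rfl

lemma PB_erase_zero {s : Finset ℕ} {i : ℕ} (h : i ∈ s) (p : ℕ → ℝ) :
    PB s p 0 = (1 - p i) * PB (s.erase i) p 0 := by
  conv_lhs => rw [← Finset.insert_erase h]
  exact PB_insert_zero (Finset.notMem_erase i s) p

lemma PB_erase_succ {s : Finset ℕ} {i : ℕ} (h : i ∈ s) (p : ℕ → ℝ) (k : ℕ) :
    PB s p (k + 1) = p i * PB (s.erase i) p k + (1 - p i) * PB (s.erase i) p (k + 1) := by
  conv_lhs => rw [← Finset.insert_erase h]
  exact PB_insert_succ (Finset.notMem_erase i s) p k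

/-- The key log-concavity (Newton-type) inequality for Poisson binomial masses. -/
lemma PB_Q {s : Finset ℕ} {p : ℕ → ℝ} (hp : ∀ i ∈ s, p i ∈ Set.Icc (0:ℝ) 1) :
    ∀ k l : ℕ, k ≤ l → PB s p k * PB s p (l + 2) ≤ PB s p (k + 1) * PB s p (l + 1) := by
  classical
  induction s using Finset.induction_on with
  | empty =>
    intro k l hkl
    rw [PB_empty_succ]
    have h0 : (0:ℝ) ≤ PB (∅ : Finset ℕ) p (k+1) * PB (∅ : Finset ℕ) p (l+1) := by
      apply mul_nonneg <;> exact PB_nonneg (by simp) _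
    simpa using h0
  | @insert i t hit ih =>
    intro k l hkl
    have hpt : ∀ m ∈ t, p m ∈ Set.Icc (0:ℝ) 1 := fun m hm => hp m (Finset.mem_insert_of_mem hm)
    have hpi : p i ∈ Set.Icc (0:ℝ) 1 := hp i (Finset.mem_insert_self i t)
    have hb : ∀ m : ℕ, 0 ≤ PB t p m := PB_nonneg hpt
    have hQ := ih hpt
    obtain ⟨hpi0, hpi1⟩ := hpi
    have h1p : (0:ℝ) ≤ 1 - p i := by linarith
    cases k with
    | zero =>
      rw [PB_insert_zero hit, PB_insert_succ hit, PB_insert_succ hit, PB_insert_succ hit]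
      have q0l := hQ 0 l (Nat.zero_le l)
      nlinarith [mul_nonneg (mul_nonneg h1p h1p) (sub_nonneg.2 q0l),
        mul_nonneg (mul_nonneg hpi0 hpi0) (mul_nonneg (hb 0) (hb l)),
        mul_nonneg (mul_nonneg hpi0 h1p) (mul_nonneg (hb 1) (hb l))]
    | succ k' =>
      obtain ⟨l', rfl⟩ : ∃ l', l = l' + 1 := ⟨l - 1, by omega⟩
      have hk'l' : k' ≤ l' := by omega
      rw [PB_insert_succ hit, PB_insert_succ hit, PB_insert_succ hit, PB_insert_succ hit]
      have h1 := hQ k' l' hk'l'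
      have h2 := hQ (k'+1) (l'+1) (by omega)
      have h3 : PB t p k' * PB t p (l' + 3) ≤ PB t p (k' + 2) * PB t p (l' + 1) := by
        rcases Nat.eq_or_lt_of_le hk'l' with h | h
        · subst h
          calc PB t p k' * PB t p (k' + 3) ≤ PB t p (k'+1) * PB t p (k'+2) :=
                hQ k' (k'+1) (by omega)
            _ = PB t p (k'+2) * PB t p (k'+1) := by ring
        · calc PB t p k' * PB t p (l' + 3) ≤ PB t p (k'+1) * PB t p (l'+2) :=
                hQ k' (l'+1) (by omega)
            _ ≤ PB t p (k'+2) * PB t p (l'+1) := hQ (k'+1) l' (by omega)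
      nlinarith [mul_nonneg (mul_nonneg hpi0 hpi0) (sub_nonneg.2 h1),
        mul_nonneg (mul_nonneg h1p h1p) (sub_nonneg.2 h2),
        mul_nonneg (mul_nonneg hpi0 h1p) (sub_nonneg.2 h3)]

lemma pb_eq_PB (n : ℕ) (p : ℕ → ℝ) (k : ℕ) : poissonBinomial n p k = PB (Finset.range n) p k := rfl

lemma pb_sum_one (n : ℕ) (p : ℕ → ℝ) :
    ∑ k ∈ Finset.range (n + 1), poissonBinomial n p k = 1 := by
  have := PB_sum_one (Finset.range n) p
  simpa [Finset.card_range, pb_eq_PB] using this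

lemma log_gap {x y z : ℝ} (hx : 0 < x) (hy : 0 < y) (hz : 0 < z) (h : x * z ≤ y * y) :
    Real.log x + Real.log z ≤ 2 * Real.log y := by
  have h1 : Real.log (x * z) ≤ Real.log (y * y) :=
    Real.log_le_log (mul_pos hx hz) h
  rw [Real.log_mul hx.ne' hz.ne', Real.log_mul hy.ne' hy.ne'] at h1
  linarith

/-- Generic derivative of `-∑ F k t * log (F k t)` when the `F k` sum to one. -/
lemma hasDerivAt_negSumXlogX {n : ℕ} {F : ℕ → ℝ → ℝ} {d : ℕ → ℝ} {x : ℝ}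
    (hF : ∀ k ∈ Finset.range (n+1), HasDerivAt (F k) (d k) x)
    (hpos : ∀ k ∈ Finset.range (n+1), F k x ≠ 0)
    (hone : ∀ t, ∑ k ∈ Finset.range (n+1), F k t = 1) :
    HasDerivAt (fun t => -∑ k ∈ Finset.range (n+1), F k t * Real.log (F k t))
      (-∑ k ∈ Finset.range (n+1), d k * Real.log (F k x)) x := by
  have hsum0 : ∑ k ∈ Finset.range (n+1), d k = 0 := by
    have h1 : HasDerivAt (fun t => ∑ k ∈ Finset.range (n+1), F k t)
        (∑ k ∈ Finset.range (n+1), d k) x := HasDerivAt.fun_sum hF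
    have h2 : (fun t => ∑ k ∈ Finset.range (n+1), F k t) = fun _ => (1:ℝ) := funext hone
    rw [h2] at h1
    exact h1.unique (hasDerivAt_const x 1)
  have hterm : ∀ k ∈ Finset.range (n+1),
      HasDerivAt (fun t => F k t * Real.log (F k t))
        (d k * Real.log (F k x) + d k) x := by
    intro k hk
    have h := (hF k hk).mul ((hF k hk).log (hpos k hk))
    have e : F k x * (d k / F k x) = d k := by
      rw [mul_div_assoc']
      exact mul_div_cancel_left₀ (d k) (hpos k hk)
    rw [e] at h
    exact h
  have h := (HasDerivAt.fun_sum hterm).neg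
  refine h.congr_deriv ?_
  rw [Finset.sum_add_distrib, hsum0, add_zero]

lemma pb_update_zero {n i : ℕ} (hi : i < n) (p : ℕ → ℝ) (t : ℝ) :
    poissonBinomial n (Function.update p i t) 0 =
      (1 - t) * PB ((Finset.range n).erase i) p 0 := by
  rw [pb_eq_PB, PB_erase_zero (Finset.mem_range.2 hi), Function.update_self]
  congr 1
  exact PB_congr (fun m hm => Function.update_of_ne (Finset.mem_erase.1 hm).1 t p) 0

lemma pb_update_succ {n i : ℕ} (hi : i < n) (p : ℕ → ℝ) (t : ℝ) (k : ℕ) :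
    poissonBinomial n (Function.update p i t) (k+1) =
      t * PB ((Finset.range n).erase i) p k
        + (1 - t) * PB ((Finset.range n).erase i) p (k+1) := by
  rw [pb_eq_PB, PB_erase_succ (Finset.mem_range.2 hi), Function.update_self]
  congr 1
  · congr 1
    exact PB_congr (fun m hm => Function.update_of_ne (Finset.mem_erase.1 hm).1 t p) k
  · congr 1
    exact PB_congr (fun m hm => Function.update_of_ne (Finset.mem_erase.1 hm).1 t p) (k+1)

lemma pb_pos {n : ℕ} {p : ℕ → ℝ} (hp : ∀ m < n, p m ∈ Set.Ioo (0:ℝ) 1) {k : ℕ} (hk : k ≤ n) :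
    0 < poissonBinomial n p k := by
  rw [pb_eq_PB]
  exact PB_pos (fun m hm => hp m (Finset.mem_range.1 hm)) (by rwa [Finset.card_range])

lemma deriv_pbEntropy_update {n : ℕ} {p : ℕ → ℝ} (hp : ∀ m < n, p m ∈ Set.Ioo (0:ℝ) 1)
    {i : ℕ} (hi : i < n) :
    deriv (fun t => pbEntropy n (Function.update p i t)) (p i) =
      ∑ k ∈ Finset.range n, PB ((Finset.range n).erase i) p k *
        (Real.log (poissonBinomial n p k) - Real.log (poissonBinomial n p (k+1))) := by
  classical
  set a : ℕ → ℝ := fun k => PB ((Finset.range n).erase i) p k with ha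
  set d : ℕ → ℝ := fun k => Nat.casesOn k (-(a 0)) (fun k' => a k' - a (k'+1)) with hd
  have hup : Function.update p i (p i) = p := Function.update_eq_self i p
  have hFd : ∀ k, HasDerivAt (fun t => poissonBinomial n (Function.update p i t) k) (d k) (p i) := by
    intro k
    cases k with
    | zero =>
      have e : (fun t => poissonBinomial n (Function.update p i t) 0)
          = fun t => (1 - t) * a 0 := funext fun t => pb_update_zero hi p t
      rw [e]
      have h := ((hasDerivAt_const (p i) (1:ℝ)).fun_sub (hasDerivAt_id (p i))).mul_const (a 0)
      refine h.congr_deriv ?_; symm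
      show -(a 0) = (0 - 1) * a 0
      ring
    | succ k =>
      have e : (fun t => poissonBinomial n (Function.update p i t) (k+1))
          = fun t => t * a k + (1 - t) * a (k+1) := funext fun t => pb_update_succ hi p t k
      rw [e]
      have h := ((hasDerivAt_id (p i)).mul_const (a k)).fun_add
        (((hasDerivAt_const (p i) (1:ℝ)).fun_sub (hasDerivAt_id (p i))).mul_const (a (k+1)))
      refine h.congr_deriv ?_; symm
      show a k - a (k+1) = 1 * a k + (0 - 1) * a (k+1)
      ring
  have hπ : ∀ k ∈ Finset.range (n+1), poissonBinomial n (Function.update p i (p i)) k ≠ 0 := by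
    intro k hk
    rw [hup]
    exact (pb_pos hp (Nat.lt_succ_iff.1 (Finset.mem_range.1 hk))).ne'
  have hone : ∀ t, ∑ k ∈ Finset.range (n+1), poissonBinomial n (Function.update p i t) k = 1 :=
    fun t => pb_sum_one n _
  have hder := hasDerivAt_negSumXlogX (F := fun k t => poissonBinomial n (Function.update p i t) k)
    (fun k _ => hFd k) hπ hone
  rw [hup] at hder
  have hder' : HasDerivAt (fun t => pbEntropy n (Function.update p i t))
      (-∑ k ∈ Finset.range (n+1), d k * Real.log (poissonBinomial n p k)) (p i) := hder
  rw [hder'.deriv]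
  -- rearrange
  set L : ℕ → ℝ := fun k => Real.log (poissonBinomial n p k) with hL
  have han : a n = 0 := by
    rw [ha]
    exact PB_eq_zero p (by rw [Finset.card_erase_of_mem (Finset.mem_range.2 hi), Finset.card_range]; omega)
  have key : (∑ k ∈ Finset.range n, a (k+1) * L (k+1)) + a 0 * L 0
      = ∑ k ∈ Finset.range n, a k * L k := by
    rw [← Finset.sum_range_succ' (fun k => a k * L k) n, Finset.sum_range_succ, han]
    ring
  have e1 : ∑ k ∈ Finset.range (n+1), d k * L k
      = (∑ k ∈ Finset.range n, (a k - a (k+1)) * L (k+1)) + (-(a 0)) * L 0 := by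
    rw [Finset.sum_range_succ' (fun k => d k * L k) n]
    rfl
  rw [e1]
  have e2 : ∑ k ∈ Finset.range n, (a k - a (k+1)) * L (k+1)
      = (∑ k ∈ Finset.range n, a k * L (k+1)) - ∑ k ∈ Finset.range n, a (k+1) * L (k+1) := by
    rw [← Finset.sum_sub_distrib]
    exact Finset.sum_congr rfl fun k _ => by ring
  have e3 : ∑ k ∈ Finset.range n, a k * (L k - L (k+1))
      = (∑ k ∈ Finset.range n, a k * L k) - ∑ k ∈ Finset.range n, a k * L (k+1) := by
    rw [← Finset.sum_sub_distrib]
    exact Finset.sum_congr rfl fun k _ => by ring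
  rw [e2]
  rw [show (∑ k ∈ Finset.range n, PB ((Finset.range n).erase i) p k *
        (Real.log (poissonBinomial n p k) - Real.log (poissonBinomial n p (k+1))))
      = ∑ k ∈ Finset.range n, a k * (L k - L (k+1)) from rfl, e3]
  linarith [key]

lemma schur_ostrowski {n : ℕ} {p : ℕ → ℝ} (hp : ∀ m < n, p m ∈ Set.Ioo (0:ℝ) 1)
    {i j : ℕ} (hi : i < n) (hj : j < n) :
    (p i - p j) *
      (deriv (fun t => pbEntropy n (Function.update p i t)) (p i)
        - deriv (fun t => pbEntropy n (Function.update p j t)) (p j)) ≤ 0 := by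
  classical
  by_cases hij : i = j
  · subst hij; simp
  -- now i ≠ j, so n ≥ 2
  obtain ⟨m, rfl⟩ : ∃ m, n = m + 2 := ⟨n - 2, by omega⟩
  set n := m + 2
  set L : ℕ → ℝ := fun k => Real.log (poissonBinomial n p k) with hL
  set M : ℕ → ℝ := fun k => L k - L (k+1) with hM
  set b : ℕ → ℝ := fun k => PB (((Finset.range n).erase i).erase j) p k with hb
  set cb : ℕ → ℝ := fun k => Nat.casesOn k (-(b 0)) (fun k' => b k' - b (k'+1)) with hcb
  have hji : j ∈ (Finset.range n).erase i :=
    Finset.mem_erase.2 ⟨fun h => hij h.symm, Finset.mem_range.2 hj⟩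
  have hij' : i ∈ (Finset.range n).erase j :=
    Finset.mem_erase.2 ⟨fun h => hij h, Finset.mem_range.2 hi⟩
  have hcomm : ((Finset.range n).erase j).erase i = ((Finset.range n).erase i).erase j :=
    Finset.erase_right_comm
  have hsub : ∀ k, PB ((Finset.range n).erase i) p k - PB ((Finset.range n).erase j) p k
      = (p j - p i) * cb k := by
    intro k
    cases k with
    | zero =>
      rw [PB_erase_zero hji, PB_erase_zero hij', hcomm]
      show (1 - p j) * b 0 - (1 - p i) * b 0 = (p j - p i) * (-(b 0))
      ring
    | succ k =>
      rw [PB_erase_succ hji, PB_erase_succ hij', hcomm]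
      show (p j * b k + (1 - p j) * b (k+1)) - (p i * b k + (1 - p i) * b (k+1))
        = (p j - p i) * (b k - b (k+1))
      ring
  have hbm : b (m+1) = 0 := by
    rw [hb]
    refine PB_eq_zero p ?_
    rw [Finset.card_erase_of_mem hji, Finset.card_erase_of_mem (Finset.mem_range.2 hi),
      Finset.card_range]
    show m + 2 - 1 - 1 < m + 1
    omega
  have hbnn : ∀ k, 0 ≤ b k := by
    intro k
    refine PB_nonneg (fun x hx => ?_) k
    have hxn : x < n := Finset.mem_range.1 (Finset.mem_of_mem_erase (Finset.mem_of_mem_erase hx))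
    exact ⟨(hp x hxn).1.le, (hp x hxn).2.le⟩
  have hgap : ∀ k < m + 1, 0 ≤ M (k+1) - M k := by
    intro k hk
    have h1 : 0 < poissonBinomial n p k := pb_pos hp (by omega)
    have h2 : 0 < poissonBinomial n p (k+1) := pb_pos hp (by omega)
    have h3 : 0 < poissonBinomial n p (k+2) := pb_pos hp (by omega)
    have hQ : poissonBinomial n p k * poissonBinomial n p (k+2)
        ≤ poissonBinomial n p (k+1) * poissonBinomial n p (k+1) := by
      rw [pb_eq_PB, pb_eq_PB, pb_eq_PB]
      exact PB_Q (fun x hx => ⟨(hp x (Finset.mem_range.1 hx)).1.le,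
        (hp x (Finset.mem_range.1 hx)).2.le⟩) k k le_rfl
    have := log_gap h1 h2 h3 hQ
    show 0 ≤ (L (k+1) - L (k+2)) - (L k - L (k+1))
    simp only [hL]
    linarith
  rw [deriv_pbEntropy_update hp hi, deriv_pbEntropy_update hp hj]
  have ediff : (∑ k ∈ Finset.range n, PB ((Finset.range n).erase i) p k * M k)
      - (∑ k ∈ Finset.range n, PB ((Finset.range n).erase j) p k * M k)
      = (p j - p i) * ∑ k ∈ Finset.range n, cb k * M k := by
    rw [← Finset.sum_sub_distrib, Finset.mul_sum]
    refine Finset.sum_congr rfl fun k _ => ?_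
    rw [← sub_mul, hsub k]; ring
  rw [ediff]
  have habel : ∑ k ∈ Finset.range n, cb k * M k
      = ∑ k ∈ Finset.range (m+1), b k * (M (k+1) - M k) := by
    rw [show n = m + 2 from rfl, Finset.sum_range_succ' (fun k => cb k * M k) (m+1)]
    have e1 : ∑ k ∈ Finset.range (m+1), cb (k+1) * M (k+1)
        = (∑ k ∈ Finset.range (m+1), b k * M (k+1)) - ∑ k ∈ Finset.range (m+1), b (k+1) * M (k+1) := by
      rw [← Finset.sum_sub_distrib]
      refine Finset.sum_congr rfl fun k _ => ?_
      show (b k - b (k+1)) * M (k+1) = _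
      ring
    have e2 : ∑ k ∈ Finset.range (m+1), b (k+1) * M (k+1)
        = (∑ k ∈ Finset.range (m+1), b k * M k) - b 0 * M 0 := by
      have := Finset.sum_range_succ' (fun k => b k * M k) (m+1)
      rw [Finset.sum_range_succ (fun k => b k * M k) (m+1), hbm] at this
      simp only [zero_mul, add_zero] at this
      linarith [this]
    have e3 : ∑ k ∈ Finset.range (m+1), b k * (M (k+1) - M k)
        = (∑ k ∈ Finset.range (m+1), b k * M (k+1)) - ∑ k ∈ Finset.range (m+1), b k * M k := by
      rw [← Finset.sum_sub_distrib]
      refine Finset.sum_congr rfl fun k _ => ?_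
      ring
    rw [e1, e2, e3]
    show _ + (-(b 0)) * M 0 = _
    ring
  rw [habel]
  have hinner : 0 ≤ ∑ k ∈ Finset.range (m+1), b k * (M (k+1) - M k) :=
    Finset.sum_nonneg fun k hk =>
      mul_nonneg (hbnn k) (hgap k (Finset.mem_range.1 hk))
  nlinarith [mul_nonneg (sq_nonneg (p i - p j)) hinner]

lemma move_step {n : ℕ} {p : ℕ → ℝ} (hp : ∀ m < n, p m ∈ Set.Ioo (0:ℝ) 1)
    {i j : ℕ} (hi : i < n) (hj : j < n) (hij : i ≠ j) {u : ℝ}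
    (hu1 : p i ≤ u) (hu2 : u ≤ (p i + p j) / 2) :
    pbEntropy n p ≤
      pbEntropy n (Function.update (Function.update p i u) j (p i + p j - u)) := by
  classical
  obtain ⟨m, rfl⟩ : ∃ m, n = m + 2 := ⟨n - 2, by omega⟩
  set n := m + 2 with hn
  set s : ℝ := p i + p j with hs
  set b : ℕ → ℝ := fun k => PB (((Finset.range n).erase i).erase j) p k with hb
  set c2 : ℕ → ℝ := fun k => Nat.casesOn k (b 0)
    (fun k' => Nat.casesOn k' (b 1 - 2*b 0) (fun k'' => b k'' - 2*b (k''+1) + b (k''+2))) with hc2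
  have hji : j ∈ (Finset.range n).erase i :=
    Finset.mem_erase.2 ⟨fun h => hij h.symm, Finset.mem_range.2 hj⟩
  have hbm1 : b (m+1) = 0 := by
    rw [hb]
    refine PB_eq_zero p ?_
    rw [Finset.card_erase_of_mem hji, Finset.card_erase_of_mem (Finset.mem_range.2 hi),
      Finset.card_range]
    show m + 2 - 1 - 1 < m + 1
    omega
  have hbm2 : b (m+2) = 0 := by
    rw [hb]
    refine PB_eq_zero p ?_
    rw [Finset.card_erase_of_mem hji, Finset.card_erase_of_mem (Finset.mem_range.2 hi),
      Finset.card_range]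
    show m + 2 - 1 - 1 < m + 2
    omega
  have hbnn : ∀ k, 0 ≤ b k := by
    intro k
    refine PB_nonneg (fun x hx => ?_) k
    have hxn : x < n := Finset.mem_range.1 (Finset.mem_of_mem_erase (Finset.mem_of_mem_erase hx))
    exact ⟨(hp x hxn).1.le, (hp x hxn).2.le⟩
  -- the parameter path
  set q : ℝ → (ℕ → ℝ) := fun u => Function.update (Function.update p i u) j (s - u) with hq
  have hqi : ∀ u, q u i = u := fun u => by
    rw [hq]
    simp only []
    rw [Function.update_of_ne hij, Function.update_self]
  have hqj : ∀ u, q u j = s - u := fun u => by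
    rw [hq]; simp only []; rw [Function.update_self]
  have hqm : ∀ u, ∀ x ∈ ((Finset.range n).erase i).erase j, q u x = p x := by
    intro u x hx
    obtain ⟨hxj, hx'⟩ := Finset.mem_erase.1 hx
    obtain ⟨hxi, _⟩ := Finset.mem_erase.1 hx'
    rw [hq]; simp only []
    rw [Function.update_of_ne hxj, Function.update_of_ne hxi]
  -- mass formulas along the path
  have hG0 : ∀ u, poissonBinomial n (q u) 0 = c2 0 * (1 - s) + (u*(s-u)) * c2 0 := by
    intro u
    rw [pb_eq_PB, PB_erase_zero (Finset.mem_range.2 hi), PB_erase_zero hji,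
      PB_congr (hqm u) 0, hqi, hqj]
    show (1 - u) * ((1 - (s - u)) * b 0) = b 0 * (1 - s) + (u*(s-u)) * b 0
    ring
  have hG1 : ∀ u, poissonBinomial n (q u) 1
      = (s * b 0 + (1-s) * b 1) + (u*(s-u)) * c2 1 := by
    intro u
    rw [pb_eq_PB, PB_erase_succ (Finset.mem_range.2 hi), PB_erase_zero hji, PB_erase_succ hji,
      PB_congr (hqm u) 0, PB_congr (hqm u) 1, hqi, hqj]
    show u * ((1 - (s - u)) * b 0) + (1 - u) * ((s - u) * b 0 + (1 - (s - u)) * b 1)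
      = (s * b 0 + (1-s) * b 1) + (u*(s-u)) * (b 1 - 2*b 0)
    ring
  have hGk : ∀ u k, poissonBinomial n (q u) (k+2)
      = (s * b (k+1) + (1-s) * b (k+2)) + (u*(s-u)) * c2 (k+2) := by
    intro u k
    rw [pb_eq_PB, PB_erase_succ (Finset.mem_range.2 hi), PB_erase_succ hji, PB_erase_succ hji,
      PB_congr (hqm u) k, PB_congr (hqm u) (k+1), PB_congr (hqm u) (k+2), hqi, hqj]
    show u * ((s - u) * b k + (1 - (s - u)) * b (k+1))
        + (1 - u) * ((s - u) * b (k+1) + (1 - (s - u)) * b (k+2))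
      = (s * b (k+1) + (1-s) * b (k+2)) + (u*(s-u)) * (b k - 2*b (k+1) + b (k+2))
    ring
  -- uniform affine-in-q(u) representation
  have hGaff : ∀ k, ∃ c1 : ℝ, ∀ u, poissonBinomial n (q u) k = c1 + (u*(s-u)) * c2 k := by
    intro k
    match k with
    | 0 => exact ⟨c2 0 * (1 - s), hG0⟩
    | 1 => exact ⟨s * b 0 + (1-s) * b 1, hG1⟩
    | (k+2) => exact ⟨s * b (k+1) + (1-s) * b (k+2), fun u => hGk u k⟩
  have hFd : ∀ (u₀ : ℝ) (k : ℕ),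
      HasDerivAt (fun u => poissonBinomial n (q u) k) ((s - 2*u₀) * c2 k) u₀ := by
    intro u₀ k
    obtain ⟨c1, hc1⟩ := hGaff k
    have e : (fun u => poissonBinomial n (q u) k) = fun u => c1 + (u*(s-u)) * c2 k :=
      funext hc1
    rw [e]
    have h := (hasDerivAt_const u₀ c1).fun_add
      (((hasDerivAt_id u₀).fun_mul ((hasDerivAt_const u₀ s).fun_sub (hasDerivAt_id u₀))).mul_const (c2 k))
    refine h.congr_deriv ?_
    simp only [id_eq]
    ring
  -- region facts
  have hs01 : 0 < s ∧ s < 2 := by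
    constructor
    · have := (hp i hi).1; have := (hp j hj).1; rw [hs]; linarith
    · have := (hp i hi).2; have := (hp j hj).2; rw [hs]; linarith
  have hreg : ∀ u₀ ∈ Set.Icc (p i) (s/2), ∀ x < n, q u₀ x ∈ Set.Ioo (0:ℝ) 1 := by
    intro u₀ hu₀ x hx
    obtain ⟨hl, hr⟩ := hu₀
    by_cases hxj : x = j
    · rw [hxj, hqj]
      constructor
      · linarith [hs01.1]
      · have := (hp i hi).1
        have hpj1 : p j < 1 := (hp j hj).2
        have h1 : s - u₀ ≤ s - p i := by linarith
        have hspi : s - p i = p j := by rw [hs]; ring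
        linarith
    · by_cases hxi : x = i
      · rw [hxi, hqi]
        refine ⟨lt_of_lt_of_le (hp i hi).1 hl, ?_⟩
        have := hs01.2
        linarith
      · have hx' : x ∈ ((Finset.range n).erase i).erase j :=
          Finset.mem_erase.2 ⟨hxj, Finset.mem_erase.2 ⟨hxi, Finset.mem_range.2 hx⟩⟩
        rw [hqm u₀ x hx']
        exact hp x hx
  -- derivative of entropy along the path, and its sign
  have hent : ∀ u₀ ∈ Set.Icc (p i) (s/2),
      HasDerivAt (fun u => pbEntropy n (q u))
        (-∑ k ∈ Finset.range (n+1), ((s - 2*u₀) * c2 k) * Real.log (poissonBinomial n (q u₀) k)) u₀ := by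
    intro u₀ hu₀
    exact hasDerivAt_negSumXlogX
      (F := fun k u => poissonBinomial n (q u) k)
      (fun k _ => hFd u₀ k)
      (fun k hk => (pb_pos (hreg u₀ hu₀) (Nat.lt_succ_iff.1 (Finset.mem_range.1 hk))).ne')
      (fun t => pb_sum_one n _)
  have hval : ∀ u₀ ∈ Set.Icc (p i) (s/2),
      0 ≤ -∑ k ∈ Finset.range (n+1), ((s - 2*u₀) * c2 k) * Real.log (poissonBinomial n (q u₀) k) := by
    intro u₀ hu₀
    set LL : ℕ → ℝ := fun k => Real.log (poissonBinomial n (q u₀) k) with hLL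
    set X := ∑ k ∈ Finset.range (m+1), b k * LL k with hX
    set Y := ∑ k ∈ Finset.range (m+1), b k * LL (k+1) with hY
    set Z := ∑ k ∈ Finset.range (m+1), b k * LL (k+2) with hZ
    have s1 : ∑ k ∈ Finset.range (m+1), b (k+1) * LL (k+2) = Y - b 0 * LL 1 := by
      have h1 := Finset.sum_range_succ' (fun k => b k * LL (k+1)) (m+1)
      have h2 := Finset.sum_range_succ (fun k => b k * LL (k+1)) (m+1)
      rw [hbm1] at h2
      simp only [zero_mul, add_zero] at h2
      rw [h2] at h1
      rw [hY]
      linarith [h1]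
    have s2 : ∑ k ∈ Finset.range (m+1), b (k+2) * LL (k+2) = X - b 0 * LL 0 - b 1 * LL 1 := by
      have h1 := Finset.sum_range_succ' (fun k => b k * LL k) (m+2)
      have h2 := Finset.sum_range_succ' (fun k => b (k+1) * LL (k+1)) (m+1)
      have h3 := Finset.sum_range_succ (fun k => b k * LL k) (m+1)
      have h4 := Finset.sum_range_succ (fun k => b k * LL k) (m+2)
      rw [hbm1] at h3
      rw [hbm2] at h4
      simp only [zero_mul, add_zero] at h3 h4
      -- h1 : Σ_{m+3} = Σ_{m+2} b(k+1)LL(k+1) + b 0 LL 0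
      -- h2 : Σ_{m+2} b(k+1)LL(k+1) = Σ_{m+1} b(k+2)LL(k+2) + b 1 LL 1
      -- h4 : Σ_{m+3} = Σ_{m+2}, h3 : Σ_{m+2} = Σ_{m+1}
      rw [h4, h3, h2] at h1
      rw [hX]
      linarith [h1]
    have hsplit : ∑ k ∈ Finset.range (n+1), c2 k * LL k = X - 2*Y + Z := by
      have h1 := Finset.sum_range_succ' (fun k => c2 k * LL k) (m+2)
      have h2 := Finset.sum_range_succ' (fun k => c2 (k+1) * LL (k+1)) (m+1)
      rw [h2] at h1
      have h3 : ∑ k ∈ Finset.range (m+1), c2 (k+2) * LL (k+2)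
          = Z - 2*(Y - b 0 * LL 1) + (X - b 0 * LL 0 - b 1 * LL 1) := by
        rw [← s1, ← s2, hZ, Finset.mul_sum, ← Finset.sum_sub_distrib, ← Finset.sum_add_distrib]
        refine Finset.sum_congr rfl fun k _ => ?_
        show (b k - 2*b (k+1) + b (k+2)) * LL (k+2) = _
        ring
      rw [h3] at h1
      rw [h1]
      show _ = X - 2*Y + Z
      have hc21 : c2 (0+1) = b 1 - 2*b 0 := rfl
      have hc20 : c2 0 = b 0 := rfl
      rw [hc21, hc20]
      ring
    have hgap : ∀ k < m + 1, 0 ≤ 2 * LL (k+1) - LL k - LL (k+2) := by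
      intro k hk
      have hppos := hreg u₀ hu₀
      have h1 : 0 < poissonBinomial n (q u₀) k := pb_pos hppos (by omega)
      have h2 : 0 < poissonBinomial n (q u₀) (k+1) := pb_pos hppos (by omega)
      have h3 : 0 < poissonBinomial n (q u₀) (k+2) := pb_pos hppos (by omega)
      have hQ : poissonBinomial n (q u₀) k * poissonBinomial n (q u₀) (k+2)
          ≤ poissonBinomial n (q u₀) (k+1) * poissonBinomial n (q u₀) (k+1) := by
        rw [pb_eq_PB, pb_eq_PB, pb_eq_PB]
        exact PB_Q (fun x hx => ⟨(hppos x (Finset.mem_range.1 hx)).1.le,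
          (hppos x (Finset.mem_range.1 hx)).2.le⟩) k k le_rfl
      have := log_gap h1 h2 h3 hQ
      simp only [hLL]
      linarith
    have hXYZ : 0 ≤ 2*Y - X - Z := by
      have : 2*Y - X - Z = ∑ k ∈ Finset.range (m+1), b k * (2*LL (k+1) - LL k - LL (k+2)) := by
        rw [hX, hY, hZ, Finset.mul_sum, ← Finset.sum_sub_distrib, ← Finset.sum_sub_distrib]
        refine (Finset.sum_congr rfl fun k _ => ?_).symm
        ring
      rw [this]
      exact Finset.sum_nonneg fun k hk =>
        mul_nonneg (hbnn k) (hgap k (Finset.mem_range.1 hk))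
    have hfact : -∑ k ∈ Finset.range (n+1), ((s - 2*u₀) * c2 k) * LL k
        = (s - 2*u₀) * (2*Y - X - Z) := by
      rw [show ∑ k ∈ Finset.range (n+1), ((s - 2*u₀) * c2 k) * LL k
          = (s - 2*u₀) * ∑ k ∈ Finset.range (n+1), c2 k * LL k by
        rw [Finset.mul_sum]; exact Finset.sum_congr rfl fun k _ => by ring]
      rw [hsplit]
      ring
    rw [hfact]
    have hsu : 0 ≤ s - 2*u₀ := by
      obtain ⟨_, hr⟩ := hu₀
      linarith
    exact mul_nonneg hsu hXYZ
  -- monotonicity on [p i, s/2]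
  have hmono : MonotoneOn (fun u => pbEntropy n (q u)) (Set.Icc (p i) (s/2)) := by
    refine monotoneOn_of_deriv_nonneg (convex_Icc _ _) ?_ ?_ ?_
    · intro u₀ hu₀
      exact ((hent u₀ hu₀).continuousAt).continuousWithinAt
    · intro u₀ hu₀
      rw [interior_Icc] at hu₀
      exact ((hent u₀ (Set.mem_Icc_of_Ioo hu₀)).differentiableAt).differentiableWithinAt
    · intro u₀ hu₀
      rw [interior_Icc] at hu₀
      have hu₀' := Set.mem_Icc_of_Ioo hu₀
      rw [(hent u₀ hu₀').deriv]
      exact hval u₀ hu₀'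
  have hpiI : p i ∈ Set.Icc (p i) (s/2) := ⟨le_refl _, le_trans hu1 hu2⟩
  have huI : u ∈ Set.Icc (p i) (s/2) := ⟨hu1, hu2⟩
  have h2 : pbEntropy n (q (p i)) ≤ pbEntropy n (q u) := hmono hpiI huI hu1
  have hqpi : q (p i) = p := by
    rw [hq]
    simp only []
    rw [Function.update_eq_self i p]
    rw [show s - p i = p j by rw [hs]; ring]
    exact Function.update_eq_self j p
  rw [hqpi] at h2
  exact h2

lemma pbEntropy_congr {n : ℕ} {p q : ℕ → ℝ} (h : ∀ m < n, p m = q m) :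
    pbEntropy n p = pbEntropy n q := by
  unfold pbEntropy
  congr 1
  refine Finset.sum_congr rfl fun k _ => ?_
  have e : poissonBinomial n p k = poissonBinomial n q k := by
    rw [pb_eq_PB, pb_eq_PB]
    exact PB_congr (fun m hm => h m (Finset.mem_range.1 hm)) k
  rw [e]

lemma entropy_le_binomial {n : ℕ} {pbar : ℝ} (hpbar : pbar ∈ Set.Ioo (0:ℝ) 1) :
    ∀ c : ℕ, ∀ p : ℕ → ℝ, (∀ m < n, p m ∈ Set.Ioo (0:ℝ) 1) →
      (∑ m ∈ Finset.range n, p m = n * pbar) →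
      ((Finset.range n).filter (fun m => p m ≠ pbar)).card ≤ c →
      pbEntropy n p ≤ pbEntropy n (fun _ => pbar) := by
  classical
  intro c
  induction c with
  | zero =>
    intro p hp hsum hcard
    have hemp : (Finset.range n).filter (fun m => p m ≠ pbar) = ∅ :=
      Finset.card_eq_zero.1 (Nat.le_zero.1 hcard)
    refine le_of_eq (pbEntropy_congr fun m hm => ?_)
    by_contra hne
    have : m ∈ (Finset.range n).filter (fun m => p m ≠ pbar) :=
      Finset.mem_filter.2 ⟨Finset.mem_range.2 hm, hne⟩
    rw [hemp] at this
    exact absurd this (Finset.notMem_empty m)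
  | succ c ih =>
    intro p hp hsum hcard
    by_cases hemp : (Finset.range n).filter (fun m => p m ≠ pbar) = ∅
    · refine le_of_eq (pbEntropy_congr fun m hm => ?_)
      by_contra hne
      have : m ∈ (Finset.range n).filter (fun m => p m ≠ pbar) :=
        Finset.mem_filter.2 ⟨Finset.mem_range.2 hm, hne⟩
      rw [hemp] at this
      exact absurd this (Finset.notMem_empty m)
    · obtain ⟨i0, hi0⟩ := Finset.nonempty_iff_ne_empty.2 hemp
      obtain ⟨hi0r, hi0ne⟩ := Finset.mem_filter.1 hi0
      have hi0n : i0 < n := Finset.mem_range.1 hi0r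
      -- find i with p i < pbar and j with p j > pbar
      have hexlt : ∃ i < n, p i < pbar := by
        by_contra h
        push_neg at h
        have hge : ∀ m ∈ Finset.range n, pbar ≤ p m :=
          fun m hm => h m (Finset.mem_range.1 hm)
        have hlt : ∑ m ∈ Finset.range n, pbar < ∑ m ∈ Finset.range n, p m := by
          refine Finset.sum_lt_sum hge ⟨i0, hi0r, ?_⟩
          rcases lt_or_gt_of_ne hi0ne.symm with h' | h'
          · exact h'
          · exact absurd (h i0 hi0n) (not_le.2 h')
        rw [Finset.sum_const, Finset.card_range, nsmul_eq_mul, hsum] at hlt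
        exact lt_irrefl _ hlt
      have hexgt : ∃ j < n, pbar < p j := by
        by_contra h
        push_neg at h
        have hge : ∀ m ∈ Finset.range n, p m ≤ pbar :=
          fun m hm => h m (Finset.mem_range.1 hm)
        have hlt : ∑ m ∈ Finset.range n, p m < ∑ m ∈ Finset.range n, pbar := by
          refine Finset.sum_lt_sum hge ⟨i0, hi0r, ?_⟩
          rcases lt_or_gt_of_ne hi0ne with h' | h'
          · exact h'
          · exact absurd (h i0 hi0n) (not_le.2 h')
        rw [Finset.sum_const, Finset.card_range, nsmul_eq_mul, hsum] at hlt
        exact lt_irrefl _ hlt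
      obtain ⟨i, hi, hilt⟩ := hexlt
      obtain ⟨j, hj, hjgt⟩ := hexgt
      have hij : i ≠ j := fun h => by subst h; exact absurd (hilt.trans hjgt) (lt_irrefl _)
      set s : ℝ := p i + p j with hs
      set u : ℝ := min pbar (s - pbar) with hu
      have hu1 : p i ≤ u := le_min hilt.le (by rw [hs]; linarith)
      have hu2 : u ≤ s / 2 := by
        rcases le_total pbar (s - pbar) with h | h
        · rw [hu, min_eq_left h]; linarith
        · rw [hu, min_eq_right h]; linarith
      have hupbar : u ≤ pbar := min_le_left _ _
      set p' : ℕ → ℝ := Function.update (Function.update p i u) j (s - u) with hp'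
      have hstep : pbEntropy n p ≤ pbEntropy n p' := move_step hp hi hj hij hu1 hu2
      have hp'i : p' i = u := by
        rw [hp', Function.update_of_ne hij, Function.update_self]
      have hp'j : p' j = s - u := by
        rw [hp', Function.update_self]
      have hp'x : ∀ x, x ≠ i → x ≠ j → p' x = p x := by
        intro x hxi hxj
        rw [hp', Function.update_of_ne hxj, Function.update_of_ne hxi]
      have hsu_pbar : pbar ≤ s - u := by
        rcases le_total pbar (s - pbar) with h | h
        · rw [hu, min_eq_left h]; linarith
        · rw [hu, min_eq_right h]; linarith
      have hp'reg : ∀ m < n, p' m ∈ Set.Ioo (0:ℝ) 1 := by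
        intro x hx
        by_cases hxj : x = j
        · rw [hxj, hp'j]
          constructor
          · linarith [hpbar.1]
          · have : s - u ≤ s - p i := by linarith
            have hspi : s - p i = p j := by rw [hs]; ring
            have := (hp j hj).2
            linarith
        · by_cases hxi : x = i
          · rw [hxi, hp'i]
            exact ⟨lt_of_lt_of_le (hp i hi).1 hu1, lt_of_le_of_lt hupbar hpbar.2⟩
          · rw [hp'x x hxi hxj]
            exact hp x hx
      have hsum' : ∑ m ∈ Finset.range n, p' m = n * pbar := by
        rw [hp']
        rw [Finset.sum_update_of_mem (Finset.mem_range.2 hj)]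
        have hisdiff : i ∈ Finset.range n \ {j} := by
          rw [Finset.mem_sdiff, Finset.mem_singleton]
          exact ⟨Finset.mem_range.2 hi, hij⟩
        rw [Finset.sum_update_of_mem hisdiff]
        have e1 : ∑ x ∈ (Finset.range n \ {j}) \ {i}, p x
            = ∑ m ∈ Finset.range n, p m - p j - p i := by
          rw [Finset.sum_sdiff_eq_sub (by
            rw [Finset.singleton_subset_iff]; exact hisdiff),
            Finset.sum_sdiff_eq_sub (by
              rw [Finset.singleton_subset_iff]; exact Finset.mem_range.2 hj)]
          simp
        rw [e1, hsum]
        rw [hs]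
        ring
      -- the new filter is smaller
      have hi_mem : i ∈ (Finset.range n).filter (fun m => p m ≠ pbar) :=
        Finset.mem_filter.2 ⟨Finset.mem_range.2 hi, ne_of_lt hilt⟩
      have hj_mem : j ∈ (Finset.range n).filter (fun m => p m ≠ pbar) :=
        Finset.mem_filter.2 ⟨Finset.mem_range.2 hj, ne_of_gt hjgt⟩
      have hkey : ∃ i1 ∈ (Finset.range n).filter (fun m => p m ≠ pbar), p' i1 = pbar := by
        rcases le_total pbar (s - pbar) with h | h
        · exact ⟨i, hi_mem, by rw [hp'i, hu, min_eq_left h]⟩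
        · refine ⟨j, hj_mem, ?_⟩
          rw [hp'j, hu, min_eq_right h]
          ring
      obtain ⟨i1, hi1mem, hi1⟩ := hkey
      have hsubset : (Finset.range n).filter (fun m => p' m ≠ pbar)
          ⊆ ((Finset.range n).filter (fun m => p m ≠ pbar)).erase i1 := by
        intro x hx
        obtain ⟨hxr, hxne⟩ := Finset.mem_filter.1 hx
        refine Finset.mem_erase.2 ⟨?_, ?_⟩
        · intro h
          rw [h, hi1] at hxne
          exact hxne rfl
        · refine Finset.mem_filter.2 ⟨hxr, ?_⟩
          by_cases hxi : x = i
          · rw [hxi]; exact ne_of_lt hilt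
          · by_cases hxj : x = j
            · rw [hxj]; exact ne_of_gt hjgt
            · rw [← hp'x x hxi hxj]; exact hxne
      have hcard' : ((Finset.range n).filter (fun m => p' m ≠ pbar)).card ≤ c := by
        have h1 := Finset.card_le_card hsubset
        rw [Finset.card_erase_of_mem hi1mem] at h1
        have h2 : 1 ≤ ((Finset.range n).filter (fun m => p m ≠ pbar)).card :=
          Finset.card_pos.2 ⟨i1, hi1mem⟩
        omega
      exact hstep.trans (ih p' hp'reg hsum' hcard')

/-- The entropy of the Poisson binomial distribution is Schur concave in the
success probabilities (the Schur–Ostrowski criterion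
`(p_i − p_j)(∂H/∂p_i − ∂H/∂p_j) ≤ 0` holds); consequently the entropy is
maximized, for a fixed mean `n p̄`, by the binomial distribution `B(n, p̄)` with
all success probabilities equal to `p̄ = (Σ p_i)/n`. -/
theorem poissonBinomial_entropy_schur_concave
    (n : ℕ) (hn : 1 ≤ n) (p : ℕ → ℝ)
    (hp : ∀ i < n, p i ∈ Set.Ioo (0 : ℝ) 1) :
    (∀ i < n, ∀ j < n,
      (p i - p j) *
        (deriv (fun t => pbEntropy n (Function.update p i t)) (p i)
          - deriv (fun t => pbEntropy n (Function.update p j t)) (p j)) ≤ 0) ∧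
    pbEntropy n p ≤ pbEntropy n (fun _ => (∑ i ∈ Finset.range n, p i) / n) := by
  constructor
  · intro i hi j hj
    exact schur_ostrowski hp hi hj
  · set pbar : ℝ := (∑ i ∈ Finset.range n, p i) / n with hpbardef
    have hn0 : (0:ℝ) < n := by exact_mod_cast hn
    have hsumpos : 0 < ∑ i ∈ Finset.range n, p i := by
      refine Finset.sum_pos (fun i hi => (hp i (Finset.mem_range.1 hi)).1) ?_
      exact ⟨0, Finset.mem_range.2 (by omega)⟩
    have hsumlt : ∑ i ∈ Finset.range n, p i < n := by
      have h := Finset.sum_lt_sum_of_nonempty (s := Finset.range n)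
        ⟨0, Finset.mem_range.2 (by omega)⟩
        (f := p) (g := fun _ => (1:ℝ)) (fun i hi => (hp i (Finset.mem_range.1 hi)).2)
      rw [Finset.sum_const, Finset.card_range, nsmul_eq_mul, mul_one] at h
      exact h
    have hpbar : pbar ∈ Set.Ioo (0:ℝ) 1 := by
      constructor
      · exact div_pos hsumpos hn0
      · rw [hpbardef, div_lt_one hn0]
        exact hsumlt
    have hsum : ∑ m ∈ Finset.range n, p m = n * pbar := by
      rw [hpbardef]
      field_simp
    exact entropy_le_binomial hpbar _ p hp hsum le_rfl
end

section
/- Let p_1, p_2, ..., p_n ∈ (0,1) and π_k^n the Poisson binomial mass function. Then ∂π_k^n/∂p_1 − ∂π_k^n/∂p_2 = −(p_1 − p_2)(π_{k−2}^{n−2} − 2π_{k−1}^{n−2} + π_k^{n−2}), where π_j^{n−2} = π_j^{n−2}(p_3,...,p_n) with the convention π_j^{n−2} = 0 for j < 0 or j > n−2. -/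
open Polynomial Finset


noncomputable def pbPoly (n : ℕ) (p : ℕ → ℝ) : Polynomial ℝ :=
  ∏ i ∈ Finset.range n, (C (p i) * X + C (1 - p i))

lemma pb_eq_coeff (n : ℕ) (p : ℕ → ℝ) (k : ℕ) :
    poissonBinomial n p k = (pbPoly n p).coeff k := by
  rw [pbPoly, Finset.prod_add, Polynomial.finset_sum_coeff]
  rw [poissonBinomial, Finset.powersetCard_eq_filter, Finset.sum_filter]
  apply Finset.sum_congr rfl
  intro A hA
  have : (∏ i ∈ A, C (p i) * X) * ∏ j ∈ Finset.range n \ A, C (1 - p j)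
      = C ((∏ i ∈ A, p i) * ∏ j ∈ Finset.range n \ A, (1 - p j)) * X ^ A.card := by
    rw [Finset.prod_mul_distrib, Finset.prod_const, map_mul, map_prod, map_prod]
    ring
  rw [this, Polynomial.coeff_C_mul, Polynomial.coeff_X_pow]
  by_cases h : A.card = k
  · simp [h]
  · rw [if_neg h, if_neg (fun h2 => h h2.symm)]; ring

lemma pb_step (n : ℕ) (p : ℕ → ℝ) (k : ℕ) :
    poissonBinomial (n+1) p k
      = p 0 * (if 1 ≤ k then poissonBinomial n (fun i => p (i+1)) (k-1) else 0)
        + (1 - p 0) * poissonBinomial n (fun i => p (i+1)) k := by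
  have hP : pbPoly (n+1) p
      = (pbPoly n (fun i => p (i+1)) * C (p 0)) * X + pbPoly n (fun i => p (i+1)) * C (1 - p 0) := by
    rw [pbPoly, Finset.prod_range_succ']
    show pbPoly n (fun i => p (i+1)) * (C (p 0) * X + C (1 - p 0)) = _
    ring
  rw [pb_eq_coeff, hP, Polynomial.coeff_add, Polynomial.coeff_mul_C]
  cases k with
  | zero =>
      simp [Polynomial.mul_coeff_zero, ← pb_eq_coeff]
      ring
  | succ k =>
      rw [Polynomial.coeff_mul_X, Polynomial.coeff_mul_C, ← pb_eq_coeff, ← pb_eq_coeff]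
      simp
      ring

lemma pb_two (m : ℕ) (r : ℕ → ℝ) (k : ℕ) :
    poissonBinomial (m+2) r k
      = r 0 * r 1 * (if 2 ≤ k then poissonBinomial m (fun i => r (i+2)) (k-2) else 0)
      + (r 0 * (1 - r 1) + r 1 * (1 - r 0)) *
          (if 1 ≤ k then poissonBinomial m (fun i => r (i+2)) (k-1) else 0)
      + (1 - r 0) * (1 - r 1) * poissonBinomial m (fun i => r (i+2)) k := by
  have hsh : (fun i => r (i+1+1)) = fun i => r (i+2) := rfl
  rw [show m+2 = (m+1)+1 from rfl, pb_step]
  rcases k with _ | _ | k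
  · simp only [pb_step, hsh]; norm_num; ring
  · simp only [pb_step, hsh]; norm_num; ring
  · have h2 : k + 1 + 1 - 2 = k := by omega
    simp only [pb_step, hsh, h2]; norm_num; ring

lemma deriv_lin (u v x : ℝ) : deriv (fun t => u * t + v) x = u := by
  have := (((hasDerivAt_id x).const_mul u).add_const v).deriv
  simpa using this

/-- Difference of partial derivatives of the Poisson binomial mass function with
respect to the first two success probabilities:
`∂π_k^n/∂p₁ − ∂π_k^n/∂p₂ = −(p₁−p₂)(π_{k−2}^{n−2} − 2π_{k−1}^{n−2} + π_k^{n−2})`,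
with the convention `π_j^{n−2} = 0` for `j < 0` (and automatically for `j > n−2`). -/
theorem poissonBinomial_deriv_diff
    (n : ℕ) (hn : 2 ≤ n) (p : ℕ → ℝ)
    (hp : ∀ i < n, p i ∈ Set.Ioo (0 : ℝ) 1) (k : ℕ) :
    deriv (fun t => poissonBinomial n (Function.update p 0 t) k) (p 0)
      - deriv (fun t => poissonBinomial n (Function.update p 1 t) k) (p 1)
    = -(p 0 - p 1) *
        ((if 2 ≤ k then poissonBinomial (n - 2) (fun i => p (i + 2)) (k - 2) else 0)
          - 2 * (if 1 ≤ k then poissonBinomial (n - 2) (fun i => p (i + 2)) (k - 1) else 0)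
          + poissonBinomial (n - 2) (fun i => p (i + 2)) k) := by
  obtain ⟨m, rfl⟩ : ∃ m, n = m + 2 := ⟨n - 2, by omega⟩
  simp only [Nat.add_sub_cancel]
  set a := if 2 ≤ k then poissonBinomial m (fun i => p (i + 2)) (k - 2) else 0 with ha
  set b := if 1 ≤ k then poissonBinomial m (fun i => p (i + 2)) (k - 1) else 0 with hb
  set c := poissonBinomial m (fun i => p (i + 2)) k with hc
  have e0 : (fun t => poissonBinomial (m + 2) (Function.update p 0 t) k)
      = fun t => (p 1 * a + (1 - p 1) * b - p 1 * b - (1 - p 1) * c) * t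
          + (p 1 * b + (1 - p 1) * c) := by
    funext t
    rw [pb_two]
    have h1 : Function.update p 0 t 0 = t := Function.update_self _ _ _
    have h2 : Function.update p 0 t 1 = p 1 := Function.update_of_ne (by norm_num) _ _
    have h3 : (fun i => Function.update p 0 t (i+2)) = fun i => p (i+2) := by
      funext i; exact Function.update_of_ne (by omega) _ _
    rw [h1, h2, h3, ← ha, ← hb, ← hc]
    ring
  have e1 : (fun t => poissonBinomial (m + 2) (Function.update p 1 t) k)
      = fun t => (p 0 * a + (1 - p 0) * b - p 0 * b - (1 - p 0) * c) * t
          + (p 0 * b + (1 - p 0) * c) := by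
    funext t
    rw [pb_two]
    have h1 : Function.update p 1 t 0 = p 0 := Function.update_of_ne (by norm_num) _ _
    have h2 : Function.update p 1 t 1 = t := Function.update_self _ _ _
    have h3 : (fun i => Function.update p 1 t (i+2)) = fun i => p (i+2) := by
      funext i; exact Function.update_of_ne (by omega) _ _
    rw [h1, h2, h3, ← ha, ← hb, ← hc]
    ring
  rw [e0, e1, deriv_lin, deriv_lin]
  ring
end

section
/- Let X = (X_1, ..., X_k) be a multivariate Bernoulli random vector on {0,1}^k with strictly positive joint probabilities, written in exponential family form P(X = x) = exp(Σ_{∅≠S⊆{1,...,k}} θ_S Π_{i∈S} x_i − A(θ)). Then the components X_1, ..., X_k are mutually independent if and only if θ_S = 0 for all S with |S| ≥ 2. -/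
open Finset


lemma sum_singleton_subsets {k : ℕ} (f : Finset (Fin k) → ℝ) (S : Finset (Fin k)) :
    ∑ T ∈ S.powerset.filter (fun T => T.card = 1), f T = ∑ i ∈ S, f {i} := by
  rw [← Finset.powersetCard_eq_filter, Finset.powersetCard_one, Finset.sum_map]
  rfl

lemma key_induction {k : ℕ} (θ : Finset (Fin k) → ℝ) (c : Fin k → ℝ)
    (hL : ∀ A : Finset (Fin k),
      ∑ T ∈ A.powerset.filter (fun T => T ≠ ∅), θ T = ∑ i ∈ A, c i) :
    ∀ S : Finset (Fin k), 2 ≤ S.card → θ S = 0 := by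
  have hc : ∀ i : Fin k, θ {i} = c i := by
    intro i
    have h := hL {i}
    rw [show ({i} : Finset (Fin k)).powerset = {∅, {i}} from rfl] at h
    simpa [Finset.filter_insert, Finset.filter_singleton] using h
  intro S
  induction S using Finset.strongInduction with
  | _ S IH =>
    intro hS2
    have hSne : S ≠ ∅ := by
      intro h; rw [h] at hS2; simp at hS2
    have hmem : S ∈ S.powerset.filter (fun T => T ≠ ∅) := by
      simp [Finset.mem_powerset, hSne]
    have hsplit := Finset.add_sum_erase _ θ hmem
    rw [hL S] at hsplit
    -- the rest sum equals ∑ i ∈ S, c i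
    have hrest : ∑ T ∈ (S.powerset.filter (fun T => T ≠ ∅)).erase S, θ T
        = ∑ i ∈ S, c i := by
      have h1 : ∀ T ∈ (S.powerset.filter (fun T => T ≠ ∅)).erase S,
          θ T = if T.card = 1 then θ T else 0 := by
        intro T hT
        rw [Finset.mem_erase, Finset.mem_filter, Finset.mem_powerset] at hT
        by_cases h1 : T.card = 1
        · simp [h1]
        · simp only [h1, if_false]
          have hne : T ≠ ∅ := hT.2.2
          have h2 : 2 ≤ T.card := by
            have h0 : T.card ≠ 0 := fun h => hne (Finset.card_eq_zero.mp h)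
            omega
          exact IH T (Finset.ssubset_iff_subset_ne.mpr ⟨hT.2.1, hT.1⟩) h2
      rw [Finset.sum_congr rfl h1, ← Finset.sum_filter]
      have hset : ((S.powerset.filter (fun T => T ≠ ∅)).erase S).filter (fun T => T.card = 1)
          = S.powerset.filter (fun T => T.card = 1) := by
        ext T
        simp only [Finset.mem_filter, Finset.mem_erase, Finset.mem_powerset]
        constructor
        · rintro ⟨⟨_, hTS, _⟩, h1⟩; exact ⟨hTS, h1⟩
        · rintro ⟨hTS, h1⟩
          refine ⟨⟨?_, hTS, ?_⟩, h1⟩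
          · intro h; rw [h] at h1; omega
          · intro h; rw [Finset.card_eq_zero.mpr h] at h1; omega
      rw [hset, sum_singleton_subsets]
      exact Finset.sum_congr rfl (fun i hi => hc i)
    rw [hrest] at hsplit
    linarith

lemma sum_nonempty_of_vanish {k : ℕ} (θ : Finset (Fin k) → ℝ)
    (hvan : ∀ S : Finset (Fin k), 2 ≤ S.card → θ S = 0) (A : Finset (Fin k)) :
    ∑ T ∈ A.powerset.filter (fun T => T ≠ ∅), θ T = ∑ i ∈ A, θ {i} := by
  have h1 : ∀ T ∈ A.powerset.filter (fun T => T ≠ ∅),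
      θ T = if T.card = 1 then θ T else 0 := by
    intro T hT
    rw [Finset.mem_filter, Finset.mem_powerset] at hT
    by_cases h1 : T.card = 1
    · simp [h1]
    · simp only [h1, if_false]
      have h0 : T.card ≠ 0 := fun h => hT.2 (Finset.card_eq_zero.mp h)
      exact hvan T (by omega)
  rw [Finset.sum_congr rfl h1, ← Finset.sum_filter]
  have hset : ((A.powerset.filter (fun T => T ≠ ∅)).filter (fun T => T.card = 1))
      = A.powerset.filter (fun T => T.card = 1) := by
    ext T
    simp only [Finset.mem_filter, Finset.mem_powerset]
    constructor
    · rintro ⟨⟨hTA, _⟩, h1⟩; exact ⟨hTA, h1⟩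
    · rintro ⟨hTA, h1⟩
      exact ⟨⟨hTA, fun h => by rw [Finset.card_eq_zero.mpr h] at h1; omega⟩, h1⟩
  rw [hset, sum_singleton_subsets]

lemma backward {k : ℕ} (P : Finset (Fin k) → ℝ) (θ : Finset (Fin k) → ℝ) (A0 : ℝ)
    (hsum : ∑ A : Finset (Fin k), P A = 1)
    (hform : ∀ A : Finset (Fin k),
      P A = Real.exp ((∑ S ∈ A.powerset.filter (fun S => S ≠ ∅), θ S) - A0))
    (hvan : ∀ S : Finset (Fin k), 2 ≤ S.card → θ S = 0) :
    ∀ A : Finset (Fin k),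
      P A = ∏ i : Fin k,
        if i ∈ A then ∑ B ∈ Finset.univ.filter (fun B : Finset (Fin k) => i ∈ B), P B
        else 1 - ∑ B ∈ Finset.univ.filter (fun B : Finset (Fin k) => i ∈ B), P B := by
  set q : Fin k → ℝ := fun i => Real.exp (θ {i}) with hqdef
  have hq : ∀ i, 0 < q i := fun i => Real.exp_pos _
  have hPA : ∀ A : Finset (Fin k), P A = Real.exp (-A0) * ∏ i ∈ A, q i := by
    intro A
    rw [hform A, sum_nonempty_of_vanish θ hvan A, sub_eq_add_neg, Real.exp_add,
      Real.exp_sum, mul_comm]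
  have htot : ∑ B : Finset (Fin k), ∏ j ∈ B, q j = ∏ j : Fin k, (q j + 1) := by
    rw [Finset.prod_add]
    simp [Finset.powerset_univ]
  have hnorm : Real.exp (-A0) * ∏ j : Fin k, (q j + 1) = 1 := by
    have h : ∑ A : Finset (Fin k), P A
        = Real.exp (-A0) * ∑ B : Finset (Fin k), ∏ j ∈ B, q j := by
      rw [Finset.mul_sum]; exact Finset.sum_congr rfl fun B _ => hPA B
    rw [← htot, ← h, hsum]
  have hR : ∀ i : Fin k, Real.exp (-A0) * ∏ j ∈ Finset.univ.erase i, (q j + 1)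
      = (q i + 1)⁻¹ := by
    intro i
    have h := Finset.mul_prod_erase Finset.univ (fun j => q j + 1) (Finset.mem_univ i)
    refine eq_inv_of_mul_eq_one_right ?_
    have h2 : (Real.exp (-A0) * ∏ j ∈ Finset.univ.erase i, (q j + 1)) * (q i + 1)
        = Real.exp (-A0) * ∏ j : Fin k, (q j + 1) := by rw [← h]; ring
    rw [mul_comm, h2, hnorm]
  have hpi : ∀ i : Fin k,
      (∑ B ∈ Finset.univ.filter (fun B : Finset (Fin k) => i ∈ B), P B)
      = q i * (q i + 1)⁻¹ := by
    intro i
    have hbij : ∑ B ∈ Finset.univ.filter (fun B : Finset (Fin k) => i ∈ B), ∏ j ∈ B, q j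
        = ∑ C ∈ (Finset.univ.erase i).powerset, q i * ∏ j ∈ C, q j := by
      refine Finset.sum_bij' (fun B _ => B.erase i) (fun C _ => insert i C) ?_ ?_ ?_ ?_ ?_
      · intro B hB
        simp only [Finset.mem_filter, Finset.mem_univ, true_and] at hB
        simp [Finset.mem_powerset, Finset.erase_subset_erase, Finset.subset_univ]
      · intro C hC
        simp only [Finset.mem_powerset] at hC
        simp
      · intro B hB
        simp only [Finset.mem_filter, Finset.mem_univ, true_and] at hB
        exact Finset.insert_erase hB
      · intro C hC
        simp only [Finset.mem_powerset] at hC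
        have : i ∉ C := fun h => (Finset.mem_erase.mp (hC h)).1 rfl
        exact Finset.erase_insert this
      · intro B hB
        simp only [Finset.mem_filter, Finset.mem_univ, true_and] at hB
        exact (Finset.mul_prod_erase B q hB).symm
    have hps : ∑ C ∈ (Finset.univ.erase i).powerset, ∏ j ∈ C, q j
        = ∏ j ∈ Finset.univ.erase i, (q j + 1) := by
      rw [Finset.prod_add]
      simp
    calc (∑ B ∈ Finset.univ.filter (fun B : Finset (Fin k) => i ∈ B), P B)
        = Real.exp (-A0) * ∑ B ∈ Finset.univ.filter (fun B : Finset (Fin k) => i ∈ B),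
            ∏ j ∈ B, q j := by
          rw [Finset.mul_sum]; exact Finset.sum_congr rfl (fun B _ => hPA B)
      _ = Real.exp (-A0) * (q i * ∏ j ∈ Finset.univ.erase i, (q j + 1)) := by
          rw [hbij, ← Finset.mul_sum, hps]
      _ = q i * (q i + 1)⁻¹ := by rw [← hR i]; ring
  intro A
  have hfac : ∀ i : Fin k,
      (if i ∈ A then ∑ B ∈ Finset.univ.filter (fun B : Finset (Fin k) => i ∈ B), P B
       else 1 - ∑ B ∈ Finset.univ.filter (fun B : Finset (Fin k) => i ∈ B), P B)
      = (if i ∈ A then q i else 1) * (q i + 1)⁻¹ := by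
    intro i
    by_cases h : i ∈ A
    · simp [h, hpi i]
    · simp only [h, if_false, hpi i]
      have hpos : 0 < q i + 1 := by linarith [hq i]
      field_simp
      ring
  rw [Finset.prod_congr rfl (fun i _ => hfac i), Finset.prod_mul_distrib,
    Finset.prod_ite_mem, Finset.univ_inter, Finset.prod_inv_distrib,
    inv_eq_of_mul_eq_one_left hnorm, hPA A, mul_comm]


lemma forward {k : ℕ} (P : Finset (Fin k) → ℝ) (θ : Finset (Fin k) → ℝ) (A0 : ℝ)
    (hpos : ∀ A, 0 < P A)
    (hsum : ∑ A : Finset (Fin k), P A = 1)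
    (hform : ∀ A : Finset (Fin k),
      P A = Real.exp ((∑ S ∈ A.powerset.filter (fun S => S ≠ ∅), θ S) - A0))
    (hind : ∀ A : Finset (Fin k),
      P A = ∏ i : Fin k,
        if i ∈ A then ∑ B ∈ Finset.univ.filter (fun B : Finset (Fin k) => i ∈ B), P B
        else 1 - ∑ B ∈ Finset.univ.filter (fun B : Finset (Fin k) => i ∈ B), P B) :
    ∀ A : Finset (Fin k),
      ∑ T ∈ A.powerset.filter (fun T => T ≠ ∅), θ T
        = ∑ i ∈ A, (Real.log (∑ B ∈ Finset.univ.filter (fun B : Finset (Fin k) => i ∈ B), P B)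
            - Real.log (1 - ∑ B ∈ Finset.univ.filter (fun B : Finset (Fin k) => i ∈ B), P B)) := by
  set p : Fin k → ℝ := fun i => ∑ B ∈ Finset.univ.filter (fun B : Finset (Fin k) => i ∈ B), P B
    with hpdef
  have hp0 : ∀ i, 0 < p i := by
    intro i
    refine Finset.sum_pos (fun B _ => hpos B) ⟨{i}, ?_⟩
    simp
  have hp1 : ∀ i, p i < 1 := by
    intro i
    rw [← hsum]
    refine Finset.sum_lt_sum_of_subset (Finset.filter_subset _ _) (Finset.mem_univ ∅)
      ?_ (hpos ∅) (fun j _ _ => (hpos j).le)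
    simp
  have hp1' : ∀ i, 0 < 1 - p i := fun i => by linarith [hp1 i]
  have hlog : ∀ A : Finset (Fin k), Real.log (P A)
      = ∑ i ∈ A, Real.log (p i) + ∑ i ∈ Aᶜ, Real.log (1 - p i) := by
    intro A
    rw [hind A, Real.log_prod (fun i _ => by
      by_cases h : i ∈ A
      · rw [if_pos h]; exact (hp0 i).ne'
      · rw [if_neg h]; exact (hp1' i).ne')]
    rw [← Finset.sum_add_sum_compl A
      (fun i => Real.log (if i ∈ A then p i else 1 - p i))]
    congr 1
    · exact Finset.sum_congr rfl fun i hi => by rw [if_pos hi]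
    · exact Finset.sum_congr rfl fun i hi => by
        rw [if_neg (Finset.mem_compl.mp hi)]
  have hA0 : -A0 = ∑ i : Fin k, Real.log (1 - p i) := by
    have h := hlog ∅
    rw [hform ∅] at h
    simpa [Real.log_exp, Finset.compl_empty, Finset.filter_singleton] using h
  intro A
  have h := hlog A
  rw [hform A, Real.log_exp] at h
  have hsplit : ∑ i : Fin k, Real.log (1 - p i)
      = ∑ i ∈ A, Real.log (1 - p i) + ∑ i ∈ Aᶜ, Real.log (1 - p i) :=
    (Finset.sum_add_sum_compl A _).symm
  rw [Finset.sum_sub_distrib]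
  have := hA0
  linarith [h, hsplit, hA0]

/-- Independence criterion for the multivariate Bernoulli distribution written in
exponential-family (log-linear) form: a strictly positive pmf on `{0,1}^k`
(outcomes identified with subsets `A ⊆ {1,…,k}` via their support), written as
`P(A) = exp(Σ_{∅≠S⊆A} θ_S − A₀)`, has mutually independent components if and
only if all interaction parameters `θ_S` with `|S| ≥ 2` vanish. -/
theorem multivariate_bernoulli_independence_iff
    (k : ℕ) (P : Finset (Fin k) → ℝ) (θ : Finset (Fin k) → ℝ) (A0 : ℝ)
    (hpos : ∀ A, 0 < P A)
    (hsum : ∑ A : Finset (Fin k), P A = 1)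
    (hform : ∀ A : Finset (Fin k),
      P A = Real.exp ((∑ S ∈ A.powerset.filter (fun S => S ≠ ∅), θ S) - A0)) :
    (∀ A : Finset (Fin k),
        P A = ∏ i : Fin k,
          if i ∈ A then ∑ B ∈ Finset.univ.filter (fun B : Finset (Fin k) => i ∈ B), P B
          else 1 - ∑ B ∈ Finset.univ.filter (fun B : Finset (Fin k) => i ∈ B), P B)
      ↔ (∀ S : Finset (Fin k), 2 ≤ S.card → θ S = 0) := by
  constructor
  · intro hind
    exact key_induction θ _ (forward P θ A0 hpos hsum hform hind)
  · intro hvan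
    exact backward P θ A0 hsum hform hvan
end
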